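/- If a Hermitian sesquilinear form [·|·] on SV satisfies [c(v)ψ | φ] = [ψ | a(v)φ] for all v ∈ V and φ, ψ ∈ SV, then [·|·] = [1|1]·⟨·|·⟩, i.e. it is a scalar multiple of the canonical inner product on SV. -/

import Mathlib

open scoped ComplexConjugate

noncomputable section

section Defs

variable {V W A : Type} [AddCommGroup V] [Module ℂ V] [CommRing A] [Algebra ℂ A]

/-- `A` (with embedding `ι`) is the symmetric algebra of `V`: universal property. -/
def IsSymmAlg (ι : V →ₗ[ℂ] A) : Prop :=
  ∀ (B : Type) [CommRing B] [Algebra ℂ B] (f : V →ₗ[ℂ] B),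
    ∃! F : A →ₐ[ℂ] B, ∀ v, F (ι v) = f v

/-- The span of `n`-fold products of generators: the degree-`n` part. -/
def GradeOf (gen : W → A) (n : ℕ) : Submodule ℂ A :=
  Submodule.span ℂ {a | ∃ f : Fin n → W, a = ∏ i, gen (f i)}

/-- The algebra is spanned by products of generators. -/
def SpanProdsOf (gen : W → A) : Prop :=
  ∀ x : A, x ∈ Submodule.span ℂ {a | ∃ (n : ℕ) (f : Fin n → W), a = ∏ i, gen (f i)}

/-- A quadratic: an antilinear functional concentrated in degree 2. -/
def IsQuadOf (gen : W → A) (ζ : A →ₗ⋆[ℂ] ℂ) : Prop :=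
  ∀ n : ℕ, n ≠ 2 → ∀ φ ∈ GradeOf gen n, ζ φ = 0

/-- The commutative product on the full antidual induced by the coproduct,
characterized on products of generators. -/
def IsConvProdOf (gen : W → A)
    (mul : (A →ₗ⋆[ℂ] ℂ) → (A →ₗ⋆[ℂ] ℂ) → (A →ₗ⋆[ℂ] ℂ)) : Prop :=
  ∀ (Φ Ψ : A →ₗ⋆[ℂ] ℂ) (n : ℕ) (v : Fin n → W),
    mul Φ Ψ (∏ i, gen (v i)) =
      ∑ S : Finset (Fin n), Φ (∏ i ∈ S, gen (v i)) * Ψ (∏ i ∈ Sᶜ, gen (v i))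

/-- The counit (unit of the antidual algebra): kills products of at least one generator. -/
def IsCounitOf (gen : W → A) (ε : A →ₗ⋆[ℂ] ℂ) : Prop :=
  ∀ (n : ℕ) (v : Fin n → W), ε (∏ i, gen (v i)) = if n = 0 then 1 else 0

/-- Powers of a functional with respect to the convolution product. -/
def powD (mul : (A →ₗ⋆[ℂ] ℂ) → (A →ₗ⋆[ℂ] ℂ) → (A →ₗ⋆[ℂ] ℂ))
    (ε ζ : A →ₗ⋆[ℂ] ℂ) : ℕ → (A →ₗ⋆[ℂ] ℂ)
  | 0 => ε
  | n + 1 => mul ζ (powD mul ε ζ n)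

/-- `E` is the Gaussian `exp ζ = Σ ζⁿ/n!` (a finite sum in each degree). -/
def IsGaussianOf (gen : W → A)
    (mul : (A →ₗ⋆[ℂ] ℂ) → (A →ₗ⋆[ℂ] ℂ) → (A →ₗ⋆[ℂ] ℂ))
    (ε ζ E : A →ₗ⋆[ℂ] ℂ) : Prop :=
  ∀ k : ℕ, ∀ ψ ∈ GradeOf gen k,
    E ψ = ∑ n ∈ Finset.range (k + 1), ((n.factorial : ℂ))⁻¹ * powD mul ε ζ n ψ

end Defs

section Defs2

variable {V A : Type} [NormedAddCommGroup V] [InnerProductSpace ℂ V]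
  [CommRing A] [Algebra ℂ A]

/-- The family of annihilation operators: derivations killing `1` with
`a v (ι w) = ⟨v|w⟩ 1`. -/
def IsAnn (ι : V →ₗ[ℂ] A) (a : V → A →ₗ[ℂ] A) : Prop :=
  ∀ v : V, (∀ x y : A, a v (x * y) = a v x * y + x * a v y) ∧
    a v 1 = 0 ∧ ∀ w : V, a v (ι w) = (inner ℂ v w : ℂ) • (1 : A)

/-- The canonical inner product on the symmetric algebra: graded pieces are
orthogonal and the permanent formula holds. (Antilinear in the first slot.) -/
def IsCanonInner (ι : V →ₗ[ℂ] A) (Bf : A →ₗ⋆[ℂ] A →ₗ[ℂ] ℂ) : Prop :=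
  (∀ (k n : ℕ), k ≠ n → ∀ (x : Fin k → V) (y : Fin n → V),
      Bf (∏ i, ι (x i)) (∏ i, ι (y i)) = 0) ∧
  ∀ (n : ℕ) (x y : Fin n → V),
      Bf (∏ i, ι (x i)) (∏ i, ι (y i)) =
        ∑ p : Equiv.Perm (Fin n), ∏ i, (inner ℂ (x i) (y (p i)) : ℂ)

/-- Iterated annihilation `a(vₙ)⋯a(v₁)φ` (applying `a(v₁)` first). -/
def iterAnn (a : V → A →ₗ[ℂ] A) : (n : ℕ) → (Fin n → V) → A → A
  | 0, _, φ => φ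
  | n + 1, v, φ => a (v (Fin.last n)) (iterAnn a n (fun i => v i.castSucc) φ)

/-- A symmetric bi-antilinear map `V × V → ℂ`. -/
def IsSymAnti (Z : V → V → ℂ) : Prop :=
  (∀ x y, Z x y = Z y x) ∧
  (∀ x y y', Z x (y + y') = Z x y + Z x y') ∧
  (∀ (c : ℂ) (x y : V), Z x (c • y) = conj c * Z x y)

end Defs2


section Aux

lemma aux_swap_succ {n : ℕ} (j : Fin (n + 1)) :
    ∃ e : Equiv.Perm (Fin n), ∀ i, Equiv.swap 0 j ((e i).succ) = j.succAbove i := by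
  classical
  set Eopt : Option (Fin n) ≃ Option (Fin n) :=
    ((finSuccEquiv' j).symm.trans (Equiv.swap 0 j)).trans (finSuccEquiv' 0) with hE
  refine ⟨Eopt.removeNone, fun i => ?_⟩
  have hsw : Equiv.swap 0 j (j.succAbove i) ≠ 0 := by
    intro h
    have : j.succAbove i = j := by
      have := congrArg (Equiv.swap 0 j) h
      simpa [Equiv.swap_apply_self, Equiv.swap_apply_left] using this
    exact Fin.succAbove_ne j i this
  have hex : ∃ x', Eopt (some i) = some x' := by
    simp only [hE, Equiv.trans_apply, finSuccEquiv'_symm_some]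
    rcases Fin.exists_succ_eq.2 hsw with ⟨k, hk⟩
    exact ⟨k, by rw [← hk, ← Fin.succAbove_zero, finSuccEquiv'_succAbove]⟩
  have h1 : some (Eopt.removeNone i) = Eopt (some i) := Equiv.removeNone_some _ hex
  have h2 : Eopt (some i) = finSuccEquiv' 0 (Equiv.swap 0 j (j.succAbove i)) := by
    simp [hE]
  rw [h2] at h1
  have := congrArg (finSuccEquiv' (0 : Fin (n+1))).symm h1
  rw [Equiv.symm_apply_apply, finSuccEquiv'_symm_some, Fin.succAbove_zero] at this
  rw [this, Equiv.swap_apply_self]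

lemma perm_rec {n : ℕ} (f : Fin (n + 1) → Fin (n + 1) → ℂ) :
    ∑ p : Equiv.Perm (Fin (n + 1)), ∏ i, f i (p i)
      = ∑ j : Fin (n + 1), f 0 j *
          ∑ q : Equiv.Perm (Fin n), ∏ i, f i.succ (j.succAbove (q i)) := by
  classical
  rw [← Equiv.sum_comp Equiv.Perm.decomposeFin.symm (fun p => ∏ i, f i (p i))]
  rw [Fintype.sum_prod_type]
  refine Finset.sum_congr rfl fun j _ => ?_
  obtain ⟨e, he⟩ := aux_swap_succ j
  rw [← Equiv.sum_comp (Equiv.mulLeft e)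
        (fun q : Equiv.Perm (Fin n) => ∏ i, f i (Equiv.Perm.decomposeFin.symm (j, q) i))]
  rw [Finset.mul_sum]
  refine Finset.sum_congr rfl fun q _ => ?_
  rw [Fin.prod_univ_succ]
  simp only [Equiv.Perm.decomposeFin_symm_apply_zero, Equiv.Perm.decomposeFin_symm_apply_succ,
    Equiv.coe_mulLeft, Equiv.Perm.mul_apply, he]

variable {V A : Type} [NormedAddCommGroup V] [InnerProductSpace ℂ V]
  [CommRing A] [Algebra ℂ A]

lemma ann_prod (ι : V →ₗ[ℂ] A) (a : V → A →ₗ[ℂ] A) (ha : IsAnn ι a) (v : V) :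
    ∀ (n : ℕ) (y : Fin (n + 1) → V),
      a v (∏ i, ι (y i)) =
        ∑ j, (inner ℂ v (y j) : ℂ) • ∏ i : Fin n, ι (y (j.succAbove i)) := by
  intro n
  induction n with
  | zero =>
    intro y
    simp [Fin.prod_univ_one, (ha v).2.2]
  | succ n ih =>
    intro y
    rw [Fin.prod_univ_succ, (ha v).1, (ha v).2.2, ih (fun i => y i.succ)]
    conv_rhs => rw [Fin.sum_univ_succ]
    congr 1
    · rw [smul_mul_assoc, one_mul, Fin.succAbove_zero]
    · rw [Finset.mul_sum]
      refine Finset.sum_congr rfl fun j _ => ?_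
      rw [mul_smul_comm]
      congr 1
      rw [Fin.prod_univ_succ, Fin.succ_succAbove_zero]
      congr 1
      refine Finset.prod_congr rfl fun i _ => ?_
      rw [Fin.succ_succAbove_succ]

lemma Bf_step (ι : V →ₗ[ℂ] A) (Bf : A →ₗ⋆[ℂ] A →ₗ[ℂ] ℂ) (hB : IsCanonInner ι Bf)
    (k m : ℕ) (x : Fin (k + 1) → V) (y : Fin (m + 1) → V) :
    Bf (∏ i, ι (x i)) (∏ i, ι (y i)) =
      ∑ j, (inner ℂ (x 0) (y j) : ℂ) *
        Bf (∏ i : Fin k, ι (x i.succ)) (∏ i : Fin m, ι (y (j.succAbove i))) := by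
  rcases eq_or_ne k m with rfl | hkm
  · rw [hB.2]
    rw [perm_rec (fun i j => (inner ℂ (x i) (y j) : ℂ))]
    refine Finset.sum_congr rfl fun j _ => ?_
    congr 1
    rw [hB.2 k (fun i => x i.succ) (fun i => y (j.succAbove i))]
  · rw [hB.1 (k + 1) (m + 1) (by omega) x y]
    symm
    refine Finset.sum_eq_zero fun j _ => ?_
    rw [hB.1 k m hkm, mul_zero]

end Aux

/-- A Hermitian sesquilinear form on `SV` for which creators and annihilators are
mutually adjoint is proportional to the canonical inner product:
`[·|·] = [1|1]·⟨·|·⟩`. -/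
theorem hermitian_form_proportional {V A : Type}
    [NormedAddCommGroup V] [InnerProductSpace ℂ V]
    [CommRing A] [Algebra ℂ A] (ι : V →ₗ[ℂ] A) (hA : IsSymmAlg ι)
    (hspan : SpanProdsOf fun w => ι w)
    (a : V → A →ₗ[ℂ] A) (ha : IsAnn ι a)
    (Bf : A →ₗ⋆[ℂ] A →ₗ[ℂ] ℂ) (hB : IsCanonInner ι Bf)
    (T : A →ₗ⋆[ℂ] A →ₗ[ℂ] ℂ)
    (hherm : ∀ φ ψ : A, T φ ψ = conj (T ψ φ))
    (hadj : ∀ (v : V) (φ ψ : A), T (ι v * ψ) φ = T ψ (a v φ)) :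
    ∀ φ ψ : A, T ψ φ = T 1 1 * Bf ψ φ := by
    classical
  have key : ∀ (k : ℕ) (x : Fin k → V) (n : ℕ) (y : Fin n → V),
      T (∏ i, ι (x i)) (∏ i, ι (y i)) = T 1 1 * Bf (∏ i, ι (x i)) (∏ i, ι (y i)) := by
    intro k
    induction k with
    | zero =>
      intro x n y
      rw [Fin.prod_univ_zero]
      cases n with
      | zero =>
        have hB11 : Bf (1 : A) 1 = 1 := by simpa using hB.2 0 x y
        rw [Fin.prod_univ_zero, hB11, mul_one]
      | succ m =>
        have h0 : Bf (1 : A) (∏ i : Fin (m + 1), ι (y i)) = 0 := by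
          simpa using hB.1 0 (m + 1) (by omega) x y
        rw [h0, mul_zero, Fin.prod_univ_succ, hherm, hadj, (ha (y 0)).2.1, map_zero]
        simp
    | succ k ih =>
      intro x n y
      have hT : T (∏ i : Fin (k + 1), ι (x i)) (∏ i : Fin n, ι (y i))
          = T (∏ i : Fin k, ι (x i.succ)) ((a (x 0)) (∏ i : Fin n, ι (y i))) := by
        rw [Fin.prod_univ_succ, hadj]
      cases n with
      | zero =>
        have h0 : Bf (∏ i : Fin (k + 1), ι (x i)) (∏ i : Fin 0, ι (y i)) = 0 :=
          hB.1 (k + 1) 0 (by omega) x y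
        rw [hT, h0, mul_zero]
        simp only [Fin.prod_univ_zero]
        rw [(ha (x 0)).2.1, map_zero]
      | succ m =>
        rw [hT, ann_prod ι a ha (x 0) m y, map_sum]
        simp only [map_smul, smul_eq_mul]
        rw [Bf_step ι Bf hB k m x y, Finset.mul_sum]
        refine Finset.sum_congr rfl fun j _ => ?_
        rw [ih (fun i => x i.succ) m (fun i => y (j.succAbove i))]
        ring
  intro φ ψ
  have h1 : ∀ (k : ℕ) (x : Fin k → V) (φ : A),
      T (∏ i, ι (x i)) φ = T 1 1 * Bf (∏ i, ι (x i)) φ := by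
    intro k x φ
    induction hspan φ using Submodule.span_induction with
    | mem b hb =>
      obtain ⟨n, y, rfl⟩ := hb
      exact key k x n y
    | zero => simp
    | add b c hb hc hb' hc' =>
      simp only [map_add]
      rw [hb', hc']; ring
    | smul c b hb hb' =>
      simp only [map_smul, smul_eq_mul]
      rw [hb']; ring
  induction hspan ψ using Submodule.span_induction with
  | mem b hb =>
    obtain ⟨n, y, rfl⟩ := hb
    exact h1 n y φ
  | zero => simp
  | add b c hb hc hb' hc' =>
    simp only [map_add, LinearMap.add_apply]
    rw [hb', hc']; ring
  | smul c b hb hb' =>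
    simp only [map_smulₛₗ, LinearMap.smul_apply, smul_eq_mul]
    rw [hb']; ring
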